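/- Let a, b, c be integers with a and b coprime. Then there exists a ℤ-linear automorphism f of ℤ⁴ with determinant 1 such that the induced automorphism ⋀²f of ⋀²(ℤ⁴) sends c·(a·(e₁∧e₂) + b·(e₃∧e₄)) to c·(e₁∧e₂ + a·b·(e₃∧e₄)). -/

import Mathlib

open ExteriorAlgebra

/-- The image in the exterior algebra of the `i`-th standard basis vector of `ℤⁿ`. -/
noncomputable def e {n : ℕ} (i : Fin n) : ExteriorAlgebra ℤ (Fin n → ℤ) :=
  ι ℤ (Pi.single i 1)

lemma e_swap {n : ℕ} (i j : Fin n) : e j * e i = -(e i * e j) := by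
  unfold e
  rw [eq_comm, neg_eq_iff_add_eq_zero, add_comm]
  exact ι_add_mul_swap _ _

lemma e_sq {n : ℕ} (i : Fin n) : e i * e i = 0 := ι_sq_zero _

lemma key_ext (a b c p q : ℤ) (hpq : p * a + q * b = 1)
    (f : (Fin 4 → ℤ) →ₗ[ℤ] (Fin 4 → ℤ))
    (h0 : f (Pi.single 0 1) = Pi.single 0 1 + (-(b*q)) • Pi.single 2 1)
    (h1 : f (Pi.single 1 1) = p • Pi.single 1 1 + (-b) • Pi.single 3 1)
    (h2 : f (Pi.single 2 1) = Pi.single 0 1 + (a*p) • Pi.single 2 1)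
    (h3 : f (Pi.single 3 1) = q • Pi.single 1 1 + a • Pi.single 3 1) :
    ExteriorAlgebra.map f (c • (a • (e 0 * e 1) + b • (e 2 * e 3))) =
      c • (e 0 * e 1 + (a * b) • (e 2 * e 3)) := by
  simp only [map_smul, map_add, map_mul, e, ExteriorAlgebra.map_apply_ι, h0, h1, h2, h3,
    map_smul, map_add]
  simp only [show ∀ i : Fin 4, ι ℤ (Pi.single i (1:ℤ)) = e i from fun _ => rfl]
  simp only [mul_add, add_mul, smul_mul_assoc, mul_smul_comm, smul_smul, smul_add,
    e_sq, e_swap 0 1, e_swap 0 2, e_swap 0 3, e_swap 1 2, e_swap 1 3, e_swap 2 3,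
    smul_zero, mul_zero, zero_mul, smul_neg]
  match_scalars <;> first
    | ring1
    | linear_combination c * hpq
    | linear_combination c*a*b * hpq

lemma col_images (a b p q : ℤ) :
    (Matrix.toLin' (!![1, 0, 1, 0; 0, p, 0, q; -(b*q), 0, a*p, 0; 0, -b, 0, a] :
        Matrix (Fin 4) (Fin 4) ℤ)) (Pi.single 0 1) = Pi.single 0 1 + (-(b*q)) • Pi.single 2 1 ∧
    (Matrix.toLin' (!![1, 0, 1, 0; 0, p, 0, q; -(b*q), 0, a*p, 0; 0, -b, 0, a] :
        Matrix (Fin 4) (Fin 4) ℤ)) (Pi.single 1 1) = p • Pi.single 1 1 + (-b) • Pi.single 3 1 ∧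
    (Matrix.toLin' (!![1, 0, 1, 0; 0, p, 0, q; -(b*q), 0, a*p, 0; 0, -b, 0, a] :
        Matrix (Fin 4) (Fin 4) ℤ)) (Pi.single 2 1) = Pi.single 0 1 + (a*p) • Pi.single 2 1 ∧
    (Matrix.toLin' (!![1, 0, 1, 0; 0, p, 0, q; -(b*q), 0, a*p, 0; 0, -b, 0, a] :
        Matrix (Fin 4) (Fin 4) ℤ)) (Pi.single 3 1) = q • Pi.single 1 1 + a • Pi.single 3 1 := by
  refine ⟨?_, ?_, ?_, ?_⟩ <;>
    (funext i; fin_cases i <;>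
      simp [Matrix.toLin'_apply, Matrix.mulVec, dotProduct, Fin.sum_univ_four,
        Pi.single_apply])

/-- The key change-of-basis lemma: if `a` and `b` are coprime, then a
determinant-one automorphism of `ℤ⁴` carries `c·(a·(e₁∧e₂) + b·(e₃∧e₄))` to
`c·(e₁∧e₂ + ab·(e₃∧e₄))`. -/
theorem change_of_basis (a b c : ℤ) (h : IsCoprime a b) :
    ∃ f : (Fin 4 → ℤ) ≃ₗ[ℤ] (Fin 4 → ℤ),
      LinearMap.det f.toLinearMap = 1 ∧
      ExteriorAlgebra.map f.toLinearMap (c • (a • (e 0 * e 1) + b • (e 2 * e 3))) =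
        c • (e 0 * e 1 + (a * b) • (e 2 * e 3)) := by
  obtain ⟨p, q, hpq⟩ := h
  set M : Matrix (Fin 4) (Fin 4) ℤ :=
    !![1, 0, 1, 0; 0, p, 0, q; -(b*q), 0, a*p, 0; 0, -b, 0, a] with hM
  set N : Matrix (Fin 4) (Fin 4) ℤ :=
    !![a*p, 0, -1, 0; 0, a, 0, -q; b*q, 0, 1, 0; 0, b, 0, p] with hN
  have hMN : M * N = 1 := by
    ext i j
    fin_cases i <;> fin_cases j <;>
      simp [hM, hN, Matrix.mul_apply, Fin.sum_univ_four, Matrix.one_apply] <;>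
      first
        | ring1
        | linear_combination hpq
  have hNM : N * M = 1 := by
    ext i j
    fin_cases i <;> fin_cases j <;>
      simp [hM, hN, Matrix.mul_apply, Fin.sum_univ_four, Matrix.one_apply] <;>
      first
        | ring1
        | linear_combination hpq
  refine ⟨LinearEquiv.ofLinear (Matrix.toLin' M) (Matrix.toLin' N)
    (by rw [← Matrix.toLin'_mul, hMN, Matrix.toLin'_one])
    (by rw [← Matrix.toLin'_mul, hNM, Matrix.toLin'_one]), ?_, ?_⟩
  · show LinearMap.det (Matrix.toLin' M) = 1
    rw [LinearMap.det_toLin', hM, Matrix.det_succ_row_zero]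
    simp [Fin.sum_univ_four, Matrix.det_fin_three, Fin.succAbove]
    linear_combination (a*p + b*q + 1) * hpq
  · show ExteriorAlgebra.map (Matrix.toLin' M) _ = _
    rw [hM]
    obtain ⟨k0, k1, k2, k3⟩ := col_images a b p q
    exact key_ext a b c p q hpq _ k0 k1 k2 k3
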